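/- Let K be a field of characteristic zero and V a K-vector space. Let T̄V = ⊕_{m≥1} V^{⊗m} be the reduced tensor module, and let Δ : T̄V → T̄V ⊗ T̄V be the unique linear map such that Δ(x) = 0 for x ∈ V and, for m ≥ 2, Δ(x₁ ⊗ ⋯ ⊗ x_m) = Σ_{i=1}^{m-1} Σ_σ (x_{σ(1)} ⊗ ⋯ ⊗ x_{σ(i)}) ⊗ (x_{σ(i+1)} ⊗ ⋯ ⊗ x_{σ(m-1)} ⊗ x_m), where σ ranges over the (i, m-1-i)-unshuffle permutations of {1, …, m-1}, i.e., those with σ(1) < ⋯ < σ(i) and σ(i+1) < ⋯ < σ(m-1). Then Δ satisfies the Zinbiel (dual Leibniz) co-identity: (id ⊗ Δ) ∘ Δ = (Δ ⊗ id) ∘ Δ + (τ ⊗ id) ∘ (Δ ⊗ id) ∘ Δ, where τ : T̄V ⊗ T̄V → T̄V ⊗ T̄V is the flip of the two tensor factors. -/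

import Mathlib

open scoped TensorProduct DirectSum

/-- The reduced tensor module `T̄V = ⊕_{m ≥ 1} V^{⊗m}`; the component of index `p`
is `V^{⊗(p+1)}`. -/
abbrev ReducedTensorModule (K : Type*) [Field K] (V : Type*) [AddCommGroup V]
    [Module K V] : Type _ :=
  ⨁ (p : ℕ), (⨂[K] (_ : Fin (p + 1)), V)

/-- Inclusion of the `m = p + 1` tensor component into `T̄V`. -/
noncomputable def reducedTensorIncl (K : Type*) [Field K] (V : Type*) [AddCommGroup V]
    [Module K V] (p : ℕ) :
    (⨂[K] (_ : Fin (p + 1)), V) →ₗ[K] ReducedTensorModule K V :=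
  DirectSum.lof K ℕ (fun p => ⨂[K] (_ : Fin (p + 1)), V) p

set_option maxHeartbeats 1000000
set_option synthInstance.maxHeartbeats 400000

section Aux

variable {K : Type*} [Field K] {V : Type*} [AddCommGroup V] [Module K V]

noncomputable def W {m : ℕ} (x : Fin m → V) (S : Finset (Fin m)) : ReducedTensorModule K V :=
  if h : S.card = S.card - 1 + 1 then
    reducedTensorIncl K V (S.card - 1)
      (PiTensorProduct.tprod K (fun j : Fin (S.card - 1 + 1) => x (S.orderEmbOfFin h j)))
  else 0

lemma W_empty {m : ℕ} (x : Fin m → V) : W (K := K) x (∅ : Finset (Fin m)) = 0 := by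
  rw [W, dif_neg]; simp

lemma W_card {m n : ℕ} (x : Fin m → V) (S : Finset (Fin m)) (h : S.card = n + 1) :
    W (K := K) x S =
      reducedTensorIncl K V n
        (PiTensorProduct.tprod K (fun j : Fin (n + 1) => x (S.orderEmbOfFin h j))) := by
  have hn : S.card - 1 = n := by omega
  subst hn
  rw [W, dif_pos (by omega)]

lemma W_card2 {m q : ℕ} (x : Fin m → V) (S : Finset (Fin m)) (h : S.card = q + 2) :
    W (K := K) x S =
      reducedTensorIncl K V (q + 1)
        (PiTensorProduct.tprod K (fun j : Fin (q + 2) => x (S.orderEmbOfFin h j))) :=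
  W_card x S h

def fmax {m : ℕ} [NeZero m] (S : Finset (Fin m)) : Fin m := WithBot.unbotD 0 S.max

lemma fmax_mem {m : ℕ} [NeZero m] {S : Finset (Fin m)} (h : S.Nonempty) : fmax S ∈ S := by
  rw [fmax, ← Finset.coe_max' h]
  exact S.max'_mem h

lemma le_fmax {m : ℕ} [NeZero m] {S : Finset (Fin m)} {a : Fin m} (ha : a ∈ S) : a ≤ fmax S := by
  rw [fmax, ← Finset.coe_max' ⟨a, ha⟩]
  exact S.le_max' a ha

end Aux


lemma strictMono_eq_of_image_eq {α : Type*} [LinearOrder α] [DecidableEq α] {k : ℕ}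
    {f g : Fin k → α} (hf : StrictMono f) (hg : StrictMono g)
    (h : Finset.univ.image f = Finset.univ.image g) : f = g := by
  have hc : (Finset.univ.image f).card = k := by
    rw [Finset.card_image_of_injective _ hf.injective, Finset.card_univ, Fintype.card_fin]
  have h1 := Finset.orderEmbOfFin_unique hc
    (fun j => Finset.mem_image_of_mem f (Finset.mem_univ j)) hf
  have h2 := Finset.orderEmbOfFin_unique hc
    (fun j => h ▸ Finset.mem_image_of_mem g (Finset.mem_univ j)) hg
  exact h1.trans h2.symm

section Main

variable {K : Type*} [Field K] {V : Type*} [AddCommGroup V] [Module K V]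
variable (Δ : ReducedTensorModule K V →ₗ[K] ReducedTensorModule K V ⊗[K] ReducedTensorModule K V)

theorem DW (hΔ₀ : ∀ x : Fin 1 → V,
      Δ (reducedTensorIncl K V 0 (PiTensorProduct.tprod K x)) = 0)
    (hΔ : ∀ (p : ℕ) (x : Fin (p + 2) → V),
      Δ (reducedTensorIncl K V (p + 1) (PiTensorProduct.tprod K x)) =
        ∑ i : Fin (p + 1), ∑ σ : Equiv.Perm (Fin (p + 1)),
          if (∀ a b : Fin (p + 1), a < b → ((b : ℕ) ≤ (i : ℕ) ∨ (i : ℕ) + 1 ≤ (a : ℕ)) →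
              σ a < σ b) then
            (reducedTensorIncl K V i (PiTensorProduct.tprod K
              (fun j : Fin ((i : ℕ) + 1) =>
                x (Fin.castSucc (σ (Fin.castLE i.2 j)))))) ⊗ₜ[K]
            (reducedTensorIncl K V ((p : ℕ) - (i : ℕ)) (PiTensorProduct.tprod K
              (fun k : Fin ((p : ℕ) - (i : ℕ) + 1) =>
                if h : (k : ℕ) + (i : ℕ) + 1 < p + 1 then
                  x (Fin.castSucc (σ ⟨(k : ℕ) + (i : ℕ) + 1, h⟩))
                else x (Fin.last (p + 1)))))
          else 0)
    {m : ℕ} [NeZero m] (x : Fin m → V) (S : Finset (Fin m)) :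
    Δ (W x S) = ∑ C ∈ (S.erase (fmax S)).powerset, W x C ⊗ₜ[K] W x (S \ C) := by
  obtain hq | hq | hq : S.card = 0 ∨ S.card = 1 ∨ 2 ≤ S.card := by omega
  · have hS : S = ∅ := Finset.card_eq_zero.mp hq
    subst hS
    simp [W_empty, TensorProduct.zero_tmul]
  · obtain ⟨a, ha⟩ := Finset.card_eq_one.mp hq
    subst ha
    rw [W_card (n := 0) x {a} (by simp), hΔ₀]
    have hfa : fmax {a} = a := Finset.mem_singleton.mp (fmax_mem ⟨a, Finset.mem_singleton_self a⟩)
    rw [hfa, Finset.erase_singleton, Finset.powerset_empty, Finset.sum_singleton, W_empty,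
      TensorProduct.zero_tmul]
  · obtain ⟨q, hq2⟩ : ∃ q, S.card = q + 2 := ⟨S.card - 2, by omega⟩
    have hSne : S.Nonempty := Finset.card_pos.mp (by omega)
    set emb := S.orderEmbOfFin hq2 with hembdef
    have hmem : ∀ j, emb j ∈ S := fun j => S.orderEmbOfFin_mem hq2 j
    have hinj : Function.Injective emb := emb.injective
    have hlast : emb (Fin.last (q + 1)) = fmax S := by
      have h1 : fmax S = S.max' hSne := by
        rw [fmax, ← Finset.coe_max' hSne]; rfl
      rw [h1]
      have h2 := Finset.orderEmbOfFin_last hq2 (by omega)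
      convert h2 using 2; ext; simp
    have hne_fmax : ∀ j : Fin (q + 1), emb (Fin.castSucc j) ∈ S.erase (fmax S) :=
      fun j => Finset.mem_erase.mpr
        ⟨by rw [← hlast]; exact fun h => (Fin.castSucc_lt_last j).ne (hinj h), hmem _⟩
    rw [W_card2 x S hq2, hΔ q (fun j => x (emb j))]
    have hR : ∑ C ∈ (S.erase (fmax S)).powerset, W (K := K) x C ⊗ₜ[K] W (K := K) x (S \ C) =
        ∑ C ∈ ((S.erase (fmax S)).powerset).filter (fun C => C.Nonempty),
          W (K := K) x C ⊗ₜ[K] W (K := K) x (S \ C) := by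
      refine (Finset.sum_filter_of_ne (fun C _ hne => ?_)).symm
      by_contra h
      rw [Finset.not_nonempty_iff_eq_empty] at h
      subst h
      exact hne (by rw [W_empty, TensorProduct.zero_tmul])
    rw [hR]
    simp only [← Finset.sum_filter]
    rw [Finset.sum_sigma']
    -- helper facts
    have heinj : ∀ σ : Equiv.Perm (Fin (q + 1)),
        Function.Injective (fun j : Fin (q + 1) => emb (Fin.castSucc (σ j))) :=
      fun σ a b hab => σ.injective (Fin.castSucc_injective _ (hinj hab))
    have hAcard : ∀ (i : Fin (q + 1)) (σ : Equiv.Perm (Fin (q + 1))),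
        ((Finset.Iic i).image (fun j => emb (Fin.castSucc (σ j)))).card = (i : ℕ) + 1 := by
      intro i σ
      rw [Finset.card_image_of_injective _ (heinj σ), Fin.card_Iic]
    have hAsub : ∀ (i : Fin (q + 1)) (σ : Equiv.Perm (Fin (q + 1))),
        (Finset.Iic i).image (fun j => emb (Fin.castSucc (σ j))) ⊆ S.erase (fmax S) := by
      intro i σ a ha
      obtain ⟨j, _, rfl⟩ := Finset.mem_image.mp ha
      exact hne_fmax (σ j)
    have hAS : ∀ (i : Fin (q + 1)) (σ : Equiv.Perm (Fin (q + 1))),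
        (Finset.Iic i).image (fun j => emb (Fin.castSucc (σ j))) ⊆ S :=
      fun i σ => (hAsub i σ).trans (Finset.erase_subset _ _)
    have hEcard : (S.erase (fmax S)).card = q + 1 := by
      rw [Finset.card_erase_of_mem (fmax_mem hSne), hq2]
      omega
    refine Finset.sum_bij
      (fun a _ => (Finset.Iic a.1).image (fun j => emb (Fin.castSucc (a.2 j)))) ?_ ?_ ?_ ?_
    · -- membership
      rintro ⟨i, σ⟩ ha
      refine Finset.mem_filter.mpr ⟨Finset.mem_powerset.mpr (hAsub i σ), ?_⟩
      exact (Finset.nonempty_Iic).image _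
    · -- injectivity
      rintro ⟨i, σ⟩ ha₁ ⟨i', σ'⟩ ha₂ hEq
      have hcnd : ∀ a b : Fin (q + 1), a < b → ((b : ℕ) ≤ (i : ℕ) ∨ (i : ℕ) + 1 ≤ (a : ℕ)) →
          σ a < σ b := (Finset.mem_filter.mp (Finset.mem_sigma.mp ha₁).2).2
      have hcnd' : ∀ a b : Fin (q + 1), a < b → ((b : ℕ) ≤ (i' : ℕ) ∨ (i' : ℕ) + 1 ≤ (a : ℕ)) →
          σ' a < σ' b := (Finset.mem_filter.mp (Finset.mem_sigma.mp ha₂).2).2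
      simp only at hEq
      have hii : i = i' := by
        have h1 := hAcard i σ
        have h2 := hAcard i' σ'
        rw [hEq] at h1
        exact Fin.ext (by omega)
      subst hii
      set A := (Finset.Iic i).image (fun j => emb (Fin.castSucc (σ j))) with hA
      -- first block
      have himg1 : ∀ τ : Equiv.Perm (Fin (q + 1)),
          Finset.univ.image (fun j : Fin ((i : ℕ) + 1) => emb (Fin.castSucc (τ (Fin.castLE i.2 j))))
            = (Finset.Iic i).image (fun j => emb (Fin.castSucc (τ j))) := by
        intro τ
        apply Finset.Subset.antisymm
        · intro a ha
          obtain ⟨j, _, rfl⟩ := Finset.mem_image.mp ha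
          exact Finset.mem_image_of_mem _ (Finset.mem_Iic.mpr (by
            rw [Fin.le_def]; simpa using Nat.lt_succ_iff.mp j.2))
        · intro a ha
          obtain ⟨j, hj, rfl⟩ := Finset.mem_image.mp ha
          have hji : (j : ℕ) < (i : ℕ) + 1 := Nat.lt_succ_iff.mpr (Fin.le_def.mp (Finset.mem_Iic.mp hj))
          exact Finset.mem_image.mpr ⟨⟨(j : ℕ), hji⟩, Finset.mem_univ _, rfl⟩
      have hblock1 : (fun j : Fin ((i : ℕ) + 1) => emb (Fin.castSucc (σ (Fin.castLE i.2 j))))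
          = fun j => emb (Fin.castSucc (σ' (Fin.castLE i.2 j))) := by
        apply strictMono_eq_of_image_eq
        · intro a b hab
          exact emb.strictMono (Fin.castSucc_lt_castSucc_iff.mpr (hcnd _ _
            (by rwa [Fin.lt_def] at hab ⊢) (Or.inl (Nat.lt_succ_iff.mp b.2))))
        · intro a b hab
          exact emb.strictMono (Fin.castSucc_lt_castSucc_iff.mpr (hcnd' _ _
            (by rwa [Fin.lt_def] at hab ⊢) (Or.inl (Nat.lt_succ_iff.mp b.2))))
        · rw [himg1, himg1, ← hEq]
      -- second block
      have hmemblock2 : ∀ (τ : Equiv.Perm (Fin (q + 1))),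
          ((Finset.Iic i).image (fun j => emb (Fin.castSucc (τ j))) = A) →
          ∀ k : Fin (q - (i : ℕ)),
          emb (Fin.castSucc (τ ⟨(k : ℕ) + (i : ℕ) + 1, by have := k.2; omega⟩)) ∈ (S.erase (fmax S)) \ A := by
        intro τ hτA k
        refine Finset.mem_sdiff.mpr ⟨hne_fmax _, ?_⟩
        intro hmemA
        rw [← hτA] at hmemA
        obtain ⟨j, hj, hj2⟩ := Finset.mem_image.mp hmemA
        have : j = ⟨(k : ℕ) + (i : ℕ) + 1, by have := k.2; omega⟩ := heinj τ hj2
        have hji := Fin.le_def.mp (Finset.mem_Iic.mp hj)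
        rw [this] at hji
        simp at hji
      have hblock2 : (fun k : Fin (q - (i : ℕ)) =>
            emb (Fin.castSucc (σ ⟨(k : ℕ) + (i : ℕ) + 1, by have := k.2; omega⟩)))
          = fun k : Fin (q - (i : ℕ)) =>
            emb (Fin.castSucc (σ' ⟨(k : ℕ) + (i : ℕ) + 1, by have := k.2; omega⟩)) := by
        have hmono : ∀ (τ : Equiv.Perm (Fin (q + 1))),
            (∀ a b : Fin (q + 1), a < b → ((b : ℕ) ≤ (i : ℕ) ∨ (i : ℕ) + 1 ≤ (a : ℕ)) →
              τ a < τ b) →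
            StrictMono (fun k : Fin (q - (i : ℕ)) =>
              emb (Fin.castSucc (τ ⟨(k : ℕ) + (i : ℕ) + 1, by have := k.2; omega⟩))) := by
          intro τ hτ a b hab
          exact emb.strictMono (Fin.castSucc_lt_castSucc_iff.mpr (hτ _ _
            (by rw [Fin.lt_def] at hab ⊢; simpa using hab) (Or.inr (by simp))))
        have himg2 : ∀ (τ : Equiv.Perm (Fin (q + 1))),
            ((Finset.Iic i).image (fun j => emb (Fin.castSucc (τ j))) = A) →
            (∀ a b : Fin (q + 1), a < b → ((b : ℕ) ≤ (i : ℕ) ∨ (i : ℕ) + 1 ≤ (a : ℕ)) →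
              τ a < τ b) →
            Finset.univ.image (fun k : Fin (q - (i : ℕ)) =>
              emb (Fin.castSucc (τ ⟨(k : ℕ) + (i : ℕ) + 1, by have := k.2; omega⟩)))
              = (S.erase (fmax S)) \ A := by
          intro τ hτA hτ
          apply Finset.eq_of_subset_of_card_le
          · intro a ha
            obtain ⟨k, _, rfl⟩ := Finset.mem_image.mp ha
            exact hmemblock2 τ hτA k
          · have hc1 : ((S.erase (fmax S)) \ A).card = q - (i : ℕ) := by
              rw [Finset.card_sdiff_of_subset (by rw [hA]; exact hAsub i σ), hEcard, hA, hAcard]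
              omega
            have hc2 : (Finset.univ.image (fun k : Fin (q - (i : ℕ)) =>
                emb (Fin.castSucc (τ ⟨(k : ℕ) + (i : ℕ) + 1, by have := k.2; omega⟩)))).card = q - (i : ℕ) := by
              rw [Finset.card_image_of_injective _ (hmono τ hτ).injective, Finset.card_univ,
                Fintype.card_fin]
            omega
        apply strictMono_eq_of_image_eq (hmono σ hcnd) (hmono σ' hcnd')
        rw [himg2 σ rfl hcnd, himg2 σ' hEq.symm hcnd']
      -- combine
      have hσσ : σ = σ' := by
        apply Equiv.ext
        intro a
        rcases Nat.lt_or_ge (a : ℕ) ((i : ℕ) + 1) with h | h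
        · have ha' : a = Fin.castLE i.2 ⟨(a : ℕ), h⟩ := Fin.ext rfl
          rw [ha']
          exact Fin.castSucc_injective _ (hinj (congrFun hblock1 ⟨(a : ℕ), h⟩))
        · have ha' : a = ⟨((a : ℕ) - (i : ℕ) - 1) + (i : ℕ) + 1, by have := a.isLt; omega⟩ := by
            apply Fin.ext
            show (a : ℕ) = (a : ℕ) - (i : ℕ) - 1 + (i : ℕ) + 1
            omega
          rw [ha']
          have hk : (a : ℕ) - (i : ℕ) - 1 < q - (i : ℕ) := by omega
          exact Fin.castSucc_injective _ (hinj (congrFun hblock2 ⟨(a : ℕ) - (i : ℕ) - 1, hk⟩))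
      rw [hσσ]
    · -- surjectivity
      intro C hC
      rw [Finset.mem_filter, Finset.mem_powerset] at hC
      obtain ⟨hCsub, hCne⟩ := hC
      have hc1 : 1 ≤ C.card := Finset.card_pos.mpr hCne
      have hcq : C.card ≤ q + 1 := by
        have := Finset.card_le_card hCsub
        rwa [hEcard] at this
      set c := C.card with hcdef
      have hi : c - 1 < q + 1 := by omega
      set C₀ : Finset (Fin (q + 1)) := Finset.univ.filter (fun j => emb (Fin.castSucc j) ∈ C)
        with hC₀
      have himg : C₀.image (fun j => emb (Fin.castSucc j)) = C := by
        apply Finset.Subset.antisymm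
        · intro a ha
          obtain ⟨j, hj, rfl⟩ := Finset.mem_image.mp ha
          exact (Finset.mem_filter.mp hj).2
        · intro a ha
          have haS : a ∈ S := Finset.mem_of_mem_erase (hCsub ha)
          have haR : a ∈ Set.range emb := by
            rw [hembdef, Finset.range_orderEmbOfFin]
            exact haS
          obtain ⟨j₀, rfl⟩ := haR
          have hjne : j₀ ≠ Fin.last (q + 1) := by
            rintro rfl
            exact (Finset.mem_erase.mp (hCsub ha)).1 hlast
          obtain ⟨j, rfl⟩ : ∃ j : Fin (q + 1), Fin.castSucc j = j₀ :=
            ⟨j₀.castPred hjne, Fin.castSucc_castPred _ _⟩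
          exact Finset.mem_image_of_mem _ (Finset.mem_filter.mpr ⟨Finset.mem_univ _, ha⟩)
      have hC₀card : C₀.card = c := by
        rw [hcdef, ← himg,
          Finset.card_image_of_injective _ (fun a b hab => Fin.castSucc_injective _ (hinj hab))]
      have hC₀ccard : C₀ᶜ.card = q + 1 - c := by
        rw [Finset.card_compl, Fintype.card_fin, hC₀card]
      have hfinj : Function.Injective (fun k : Fin (q + 1) =>
          if h : (k : ℕ) < c then C₀.orderEmbOfFin hC₀card ⟨(k : ℕ), h⟩
          else C₀ᶜ.orderEmbOfFin hC₀ccard ⟨(k : ℕ) - c, by omega⟩) := by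
        intro k k' hkk'
        simp only at hkk'
        by_cases h1 : (k : ℕ) < c <;> by_cases h2 : (k' : ℕ) < c
        · rw [dif_pos h1, dif_pos h2] at hkk'
          have := (C₀.orderEmbOfFin hC₀card).injective hkk'
          exact Fin.ext (by simpa [Fin.ext_iff] using this)
        · rw [dif_pos h1, dif_neg h2] at hkk'
          have h3 := C₀.orderEmbOfFin_mem hC₀card ⟨(k : ℕ), h1⟩
          rw [hkk'] at h3
          exact absurd h3 (Finset.mem_compl.mp (C₀ᶜ.orderEmbOfFin_mem hC₀ccard _))
        · rw [dif_neg h1, dif_pos h2] at hkk'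
          have h3 := C₀.orderEmbOfFin_mem hC₀card ⟨(k' : ℕ), h2⟩
          rw [← hkk'] at h3
          exact absurd h3 (Finset.mem_compl.mp (C₀ᶜ.orderEmbOfFin_mem hC₀ccard _))
        · rw [dif_neg h1, dif_neg h2] at hkk'
          have := (C₀ᶜ.orderEmbOfFin hC₀ccard).injective hkk'
          rw [Fin.mk.injEq] at this
          exact Fin.ext (by omega)
      set σ : Equiv.Perm (Fin (q + 1)) :=
        Equiv.ofBijective _ (Finite.injective_iff_bijective.mp hfinj) with hσdef
      have hσ : ∀ k : Fin (q + 1), σ k =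
          if h : (k : ℕ) < c then C₀.orderEmbOfFin hC₀card ⟨(k : ℕ), h⟩
          else C₀ᶜ.orderEmbOfFin hC₀ccard ⟨(k : ℕ) - c, by omega⟩ := fun k => rfl
      set i : Fin (q + 1) := ⟨c - 1, hi⟩ with hidef
      have hcond : ∀ a b : Fin (q + 1), a < b →
          ((b : ℕ) ≤ (i : ℕ) ∨ (i : ℕ) + 1 ≤ (a : ℕ)) → σ a < σ b := by
        intro a b hab hor
        rw [hσ, hσ]
        have hab' : (a : ℕ) < (b : ℕ) := hab
        rcases hor with h | h
        · have hb : (b : ℕ) < c := by simp only [hidef] at h; omega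
          have ha : (a : ℕ) < c := by omega
          rw [dif_pos ha, dif_pos hb]
          exact (C₀.orderEmbOfFin hC₀card).strictMono (by simp [Fin.lt_def, hab'])
        · have ha : ¬ (a : ℕ) < c := by simp only [hidef] at h; omega
          have hb : ¬ (b : ℕ) < c := by omega
          rw [dif_neg ha, dif_neg hb]
          exact (C₀ᶜ.orderEmbOfFin hC₀ccard).strictMono (by simp [Fin.lt_def]; omega)
      refine ⟨⟨i, σ⟩, Finset.mem_sigma.mpr ⟨Finset.mem_univ _,
        Finset.mem_filter.mpr ⟨Finset.mem_univ _, hcond⟩⟩, ?_⟩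
      simp only
      apply Finset.eq_of_subset_of_card_le
      · intro a ha
        obtain ⟨j, hj, rfl⟩ := Finset.mem_image.mp ha
        have hji : (j : ℕ) < c := by
          have := Fin.le_def.mp (Finset.mem_Iic.mp hj)
          simp only [hidef] at this
          omega
        have : σ j ∈ C₀ := by
          rw [hσ, dif_pos hji]
          exact C₀.orderEmbOfFin_mem hC₀card _
        exact (Finset.mem_filter.mp this).2
      · rw [hAcard]
        simp only [hidef]
        omega
    · -- values
      rintro ⟨i, σ⟩ ha
      have hcnd : ∀ a b : Fin (q + 1), a < b → ((b : ℕ) ≤ (i : ℕ) ∨ (i : ℕ) + 1 ≤ (a : ℕ)) →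
          σ a < σ b := (Finset.mem_filter.mp (Finset.mem_sigma.mp ha).2).2
      simp only
      set A := (Finset.Iic i).image (fun j => emb (Fin.castSucc (σ j))) with hA
      have hsd : (S \ A).card = (q - (i : ℕ)) + 1 := by
        rw [Finset.card_sdiff_of_subset (hAS i σ), hq2, hAcard]
        omega
      rw [W_card x A (hAcard i σ), W_card x (S \ A) hsd]
      have e1 : (fun j : Fin ((i : ℕ) + 1) => emb (Fin.castSucc (σ (Fin.castLE i.2 j))))
          = A.orderEmbOfFin (hAcard i σ) := by
        apply Finset.orderEmbOfFin_unique
        · intro j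
          exact Finset.mem_image_of_mem _ (Finset.mem_Iic.mpr (by
            rw [Fin.le_def]; simpa using Nat.lt_succ_iff.mp j.2))
        · intro a b hab
          exact emb.strictMono (Fin.castSucc_lt_castSucc_iff.mpr (hcnd _ _
            (by rwa [Fin.lt_def] at hab ⊢) (Or.inl (Nat.lt_succ_iff.mp b.2))))
      have e2 : (fun k : Fin (q - (i : ℕ) + 1) =>
            if h : (k : ℕ) + (i : ℕ) + 1 < q + 1 then emb (Fin.castSucc (σ ⟨(k : ℕ) + (i : ℕ) + 1, h⟩))
            else emb (Fin.last (q + 1)))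
          = (S \ A).orderEmbOfFin hsd := by
        apply Finset.orderEmbOfFin_unique
        · intro k
          by_cases h1 : (k : ℕ) + (i : ℕ) + 1 < q + 1
          · rw [dif_pos h1]
            refine Finset.mem_sdiff.mpr ⟨hmem _, ?_⟩
            intro hmemA
            obtain ⟨j, hj, hj2⟩ := Finset.mem_image.mp hmemA
            have hje : j = ⟨(k : ℕ) + (i : ℕ) + 1, h1⟩ := heinj σ hj2
            have hji := Fin.le_def.mp (Finset.mem_Iic.mp hj)
            rw [hje] at hji
            simp at hji
          · rw [dif_neg h1]
            refine Finset.mem_sdiff.mpr ⟨hmem _, ?_⟩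
            intro hmemA
            obtain ⟨j, hj, hj2⟩ := Finset.mem_image.mp hmemA
            exact (Fin.castSucc_lt_last (σ j)).ne (hinj hj2)
        · intro k k' hkk'
          beta_reduce
          have hkk2 : (k : ℕ) < (k' : ℕ) := hkk'
          have hkq : (k' : ℕ) < q - (i : ℕ) + 1 := k'.2
          have h1 : (k : ℕ) + (i : ℕ) + 1 < q + 1 := by omega
          rw [dif_pos h1]
          by_cases h2 : (k' : ℕ) + (i : ℕ) + 1 < q + 1
          · rw [dif_pos h2]
            exact emb.strictMono (Fin.castSucc_lt_castSucc_iff.mpr (hcnd _ _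
              (by rw [Fin.lt_def]; simpa using hkk2) (Or.inr (by simp))))
          · rw [dif_neg h2]
            exact emb.strictMono (Fin.castSucc_lt_last _)
      congr 1
      · congr 1
        apply congrArg
        funext j
        exact congrArg x (congrFun e1 j)
      · congr 1
        apply congrArg
        funext k
        rw [← apply_dite x, congrFun e2 k]



end Main

lemma final_combinatorial {K : Type*} [Field K] {V : Type*} [AddCommGroup V] [Module K V]
    (p : ℕ) (x : Fin (p + 2) → V) :
    (∑ A ∈ (Finset.univ.erase (Fin.last (p + 1))).powerset,
      ∑ B ∈ ((Finset.univ.erase (Fin.last (p + 1))) \ A).powerset,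
        W (K := K) x A ⊗ₜ[K] (W (K := K) x B ⊗ₜ[K] W (K := K) x ((Finset.univ \ A) \ B)))
    = (∑ A ∈ (Finset.univ.erase (Fin.last (p + 1))).powerset,
        ∑ C ∈ (A.erase (fmax A)).powerset,
          W (K := K) x C ⊗ₜ[K] (W (K := K) x (A \ C) ⊗ₜ[K] W (K := K) x (Finset.univ \ A)))
      + (∑ A ∈ (Finset.univ.erase (Fin.last (p + 1))).powerset,
        ∑ C ∈ (A.erase (fmax A)).powerset,
          W (K := K) x (A \ C) ⊗ₜ[K] (W (K := K) x C ⊗ₜ[K] W (K := K) x (Finset.univ \ A))) := by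
  have hdd : ∀ s t : Finset (Fin (p + 2)), (Finset.univ \ s) \ t = Finset.univ \ (s ∪ t) := by
    intro s t
    ext j
    simp only [Finset.mem_sdiff, Finset.mem_univ, true_and, Finset.mem_union]
    tauto
  rw [Finset.sum_sigma', Finset.sum_sigma', Finset.sum_sigma']
  -- restrict LHS to nonempty pairs
  rw [← Finset.sum_filter_of_ne (p := fun z : (_ : Finset (Fin (p + 2))) × Finset (Fin (p + 2)) =>
    z.1.Nonempty ∧ z.2.Nonempty)
    (s := ((Finset.univ.erase (Fin.last (p + 1))).powerset).sigma
      (fun A => ((Finset.univ.erase (Fin.last (p + 1))) \ A).powerset))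
    (f := fun z => W (K := K) x z.1 ⊗ₜ[K] (W (K := K) x z.2 ⊗ₜ[K]
      W (K := K) x ((Finset.univ \ z.1) \ z.2)))
    (fun z _ hne => by
      by_contra hcon
      rw [not_and_or] at hcon
      apply hne
      rcases hcon with h | h <;>
      · rw [Finset.not_nonempty_iff_eq_empty] at h
        simp [h, W_empty])]
  -- restrict the two RHS sums to nonempty C
  rw [← Finset.sum_filter_of_ne (p := fun z : (_ : Finset (Fin (p + 2))) × Finset (Fin (p + 2)) =>
    z.2.Nonempty)
    (s := ((Finset.univ.erase (Fin.last (p + 1))).powerset).sigma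
      (fun A => (A.erase (fmax A)).powerset))
    (f := fun z => W (K := K) x z.2 ⊗ₜ[K] (W (K := K) x (z.1 \ z.2) ⊗ₜ[K]
      W (K := K) x (Finset.univ \ z.1)))
    (fun z _ hne => by
      by_contra hcon
      rw [Finset.not_nonempty_iff_eq_empty] at hcon
      exact hne (by simp [hcon, W_empty]))]
  rw [← Finset.sum_filter_of_ne (p := fun z : (_ : Finset (Fin (p + 2))) × Finset (Fin (p + 2)) =>
    z.2.Nonempty)
    (s := ((Finset.univ.erase (Fin.last (p + 1))).powerset).sigma
      (fun A => (A.erase (fmax A)).powerset))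
    (f := fun z => W (K := K) x (z.1 \ z.2) ⊗ₜ[K] (W (K := K) x z.2 ⊗ₜ[K]
      W (K := K) x (Finset.univ \ z.1)))
    (fun z _ hne => by
      by_contra hcon
      rw [Finset.not_nonempty_iff_eq_empty] at hcon
      exact hne (by simp [hcon, W_empty]))]
  rw [← Finset.sum_filter_add_sum_filter_not
    (Finset.filter (fun z : (_ : Finset (Fin (p + 2))) × Finset (Fin (p + 2)) =>
      z.1.Nonempty ∧ z.2.Nonempty)
      (((Finset.univ.erase (Fin.last (p + 1))).powerset).sigma
        (fun A => ((Finset.univ.erase (Fin.last (p + 1))) \ A).powerset)))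
    (fun z => fmax (z.1 ∪ z.2) ∈ z.2)]
  congr 1
  · -- first bijection : (A, B) ↦ (A ∪ B, A), case fmax ∈ B
    refine Finset.sum_nbij' (fun z => ⟨z.1 ∪ z.2, z.1⟩) (fun w => ⟨w.2, w.1 \ w.2⟩) ?_ ?_ ?_ ?_ ?_
    · rintro ⟨z1, z2⟩ hz
      simp only [Finset.mem_filter, Finset.mem_sigma, Finset.mem_powerset] at hz ⊢
      obtain ⟨⟨⟨hz1, hz2⟩, hne1, hne2⟩, hQ⟩ := hz
      have hfm : fmax (z1 ∪ z2) ∉ z1 := fun hc => (Finset.mem_sdiff.mp (hz2 hQ)).2 hc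
      refine ⟨⟨Finset.union_subset hz1 (hz2.trans (Finset.sdiff_subset)), ?_⟩, hne1⟩
      intro a ha
      exact Finset.mem_erase.mpr ⟨fun hc => hfm (hc ▸ ha), Finset.mem_union_left _ ha⟩
    · rintro ⟨w1, w2⟩ hw
      simp only [Finset.mem_filter, Finset.mem_sigma, Finset.mem_powerset] at hw ⊢
      obtain ⟨⟨hw1, hw2⟩, hne2⟩ := hw
      have hw21 : w2 ⊆ w1 := hw2.trans (Finset.erase_subset _ _)
      have hw1ne : w1.Nonempty := hne2.mono hw21
      have hfm : fmax w1 ∈ w1 \ w2 := Finset.mem_sdiff.mpr ⟨fmax_mem hw1ne,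
        fun hc => (Finset.mem_erase.mp (hw2 hc)).1 rfl⟩
      refine ⟨⟨⟨hw21.trans hw1, ?_⟩, hne2, ⟨_, hfm⟩⟩, ?_⟩
      · exact (Finset.sdiff_subset_sdiff hw1 (Finset.Subset.refl w2))
      · rw [Finset.union_sdiff_of_subset hw21]
        exact hfm
    · rintro ⟨z1, z2⟩ hz
      simp only [Finset.mem_filter, Finset.mem_sigma, Finset.mem_powerset] at hz
      obtain ⟨⟨⟨hz1, hz2⟩, hne1, hne2⟩, hQ⟩ := hz
      have hdisj : Disjoint z1 z2 :=
        Finset.disjoint_left.mpr fun a ha1 ha2 => (Finset.mem_sdiff.mp (hz2 ha2)).2 ha1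
      exact congrArg (Sigma.mk z1) (Finset.union_sdiff_cancel_left hdisj)
    · rintro ⟨w1, w2⟩ hw
      simp only [Finset.mem_filter, Finset.mem_sigma, Finset.mem_powerset] at hw
      obtain ⟨⟨hw1, hw2⟩, hne2⟩ := hw
      have hw21 : w2 ⊆ w1 := hw2.trans (Finset.erase_subset _ _)
      exact congrArg (fun t => Sigma.mk t w2) (Finset.union_sdiff_of_subset hw21)
    · rintro ⟨z1, z2⟩ hz
      simp only [Finset.mem_filter, Finset.mem_sigma, Finset.mem_powerset] at hz
      obtain ⟨⟨⟨hz1, hz2⟩, hne1, hne2⟩, hQ⟩ := hz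
      have hdisj : Disjoint z1 z2 :=
        Finset.disjoint_left.mpr fun a ha1 ha2 => (Finset.mem_sdiff.mp (hz2 ha2)).2 ha1
      simp only
      rw [Finset.union_sdiff_cancel_left hdisj, hdd]
  · -- second bijection : (A, B) ↦ (A ∪ B, B), case fmax ∉ B
    refine Finset.sum_nbij' (fun z => ⟨z.1 ∪ z.2, z.2⟩) (fun w => ⟨w.1 \ w.2, w.2⟩) ?_ ?_ ?_ ?_ ?_
    · rintro ⟨z1, z2⟩ hz
      simp only [Finset.mem_filter, Finset.mem_sigma, Finset.mem_powerset] at hz ⊢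
      obtain ⟨⟨⟨hz1, hz2⟩, hne1, hne2⟩, hQ⟩ := hz
      refine ⟨⟨Finset.union_subset hz1 (hz2.trans (Finset.sdiff_subset)), ?_⟩, hne2⟩
      intro a ha
      exact Finset.mem_erase.mpr ⟨fun hc => hQ (hc ▸ ha), Finset.mem_union_right _ ha⟩
    · rintro ⟨w1, w2⟩ hw
      simp only [Finset.mem_filter, Finset.mem_sigma, Finset.mem_powerset] at hw ⊢
      obtain ⟨⟨hw1, hw2⟩, hne2⟩ := hw
      have hw21 : w2 ⊆ w1 := hw2.trans (Finset.erase_subset _ _)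
      have hw1ne : w1.Nonempty := hne2.mono hw21
      have hfm : fmax w1 ∈ w1 \ w2 := Finset.mem_sdiff.mpr ⟨fmax_mem hw1ne,
        fun hc => (Finset.mem_erase.mp (hw2 hc)).1 rfl⟩
      refine ⟨⟨⟨(Finset.sdiff_subset).trans hw1, ?_⟩, ⟨_, hfm⟩, hne2⟩, ?_⟩
      · intro a ha
        exact Finset.mem_sdiff.mpr ⟨hw21.trans hw1 ha, fun hc => (Finset.mem_sdiff.mp hc).2 ha⟩
      · rw [Finset.sdiff_union_of_subset hw21]
        intro hc
        exact (Finset.mem_erase.mp (hw2 hc)).1 rfl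
    · rintro ⟨z1, z2⟩ hz
      simp only [Finset.mem_filter, Finset.mem_sigma, Finset.mem_powerset] at hz
      obtain ⟨⟨⟨hz1, hz2⟩, hne1, hne2⟩, hQ⟩ := hz
      have hdisj : Disjoint z1 z2 :=
        Finset.disjoint_left.mpr fun a ha1 ha2 => (Finset.mem_sdiff.mp (hz2 ha2)).2 ha1
      exact congrArg (fun t => Sigma.mk t z2) (Finset.union_sdiff_cancel_right hdisj)
    · rintro ⟨w1, w2⟩ hw
      simp only [Finset.mem_filter, Finset.mem_sigma, Finset.mem_powerset] at hw
      obtain ⟨⟨hw1, hw2⟩, hne2⟩ := hw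
      have hw21 : w2 ⊆ w1 := hw2.trans (Finset.erase_subset _ _)
      exact congrArg (fun t => Sigma.mk t w2) (Finset.sdiff_union_of_subset hw21)
    · rintro ⟨z1, z2⟩ hz
      simp only [Finset.mem_filter, Finset.mem_sigma, Finset.mem_powerset] at hz
      obtain ⟨⟨⟨hz1, hz2⟩, hne1, hne2⟩, hQ⟩ := hz
      have hdisj : Disjoint z1 z2 :=
        Finset.disjoint_left.mpr fun a ha1 ha2 => (Finset.mem_sdiff.mp (hz2 ha2)).2 ha1
      simp only
      rw [Finset.union_sdiff_cancel_right hdisj, hdd]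

theorem zinbiel_coidentity (K : Type*) [Field K] [CharZero K] (V : Type*) [AddCommGroup V]
    [Module K V]
    (Δ : ReducedTensorModule K V →ₗ[K] ReducedTensorModule K V ⊗[K] ReducedTensorModule K V)
    (hΔ₀ : ∀ x : Fin 1 → V,
      Δ (reducedTensorIncl K V 0 (PiTensorProduct.tprod K x)) = 0)
    (hΔ : ∀ (p : ℕ) (x : Fin (p + 2) → V),
      Δ (reducedTensorIncl K V (p + 1) (PiTensorProduct.tprod K x)) =
        ∑ i : Fin (p + 1), ∑ σ : Equiv.Perm (Fin (p + 1)),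
          if (∀ a b : Fin (p + 1), a < b → ((b : ℕ) ≤ (i : ℕ) ∨ (i : ℕ) + 1 ≤ (a : ℕ)) →
              σ a < σ b) then
            (reducedTensorIncl K V i (PiTensorProduct.tprod K
              (fun j : Fin ((i : ℕ) + 1) =>
                x (Fin.castSucc (σ (Fin.castLE i.2 j)))))) ⊗ₜ[K]
            (reducedTensorIncl K V ((p : ℕ) - (i : ℕ)) (PiTensorProduct.tprod K
              (fun k : Fin ((p : ℕ) - (i : ℕ) + 1) =>
                if h : (k : ℕ) + (i : ℕ) + 1 < p + 1 then
                  x (Fin.castSucc (σ ⟨(k : ℕ) + (i : ℕ) + 1, h⟩))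
                else x (Fin.last (p + 1)))))
          else 0) :
    (TensorProduct.map LinearMap.id Δ) ∘ₗ Δ =
      ((TensorProduct.assoc K (ReducedTensorModule K V) (ReducedTensorModule K V)
          (ReducedTensorModule K V)).toLinearMap ∘ₗ
        (TensorProduct.map Δ LinearMap.id) ∘ₗ Δ) +
      ((TensorProduct.assoc K (ReducedTensorModule K V) (ReducedTensorModule K V)
          (ReducedTensorModule K V)).toLinearMap ∘ₗ
        (TensorProduct.map
          (TensorProduct.comm K (ReducedTensorModule K V)
            (ReducedTensorModule K V)).toLinearMap LinearMap.id) ∘ₗ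
        (TensorProduct.map Δ LinearMap.id) ∘ₗ Δ) := by
  refine DirectSum.linearMap_ext _ fun p => PiTensorProduct.ext ?_
  apply MultilinearMap.ext
  intro x
  simp only [LinearMap.compMultilinearMap_apply, LinearMap.comp_apply, LinearMap.add_apply,
    LinearEquiv.coe_coe]
  have hincl : DirectSum.lof K ℕ (fun p => ⨂[K] (_ : Fin (p + 1)), V) p
      = reducedTensorIncl K V p := rfl
  rw [hincl]
  rcases p with _ | p
  · rw [hΔ₀ x]
    simp
  · have huniv : (reducedTensorIncl K V (p + 1)) ((PiTensorProduct.tprod K) x)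
        = W (K := K) x (Finset.univ : Finset (Fin (p + 2))) := by
      rw [W_card2 (q := p) x Finset.univ (by simp)]
      have h1 : (fun j : Fin (p + 2) => j) = ⇑(Finset.univ.orderEmbOfFin
          (by simp : (Finset.univ : Finset (Fin (p + 2))).card = p + 2)) :=
        Finset.orderEmbOfFin_unique _ (fun j => Finset.mem_univ _) strictMono_id
      refine congrArg _ (congrArg _ ?_)
      funext j
      exact congrArg x (congrFun h1 j)
    rw [huniv]
    have hfl : ∀ T : Finset (Fin (p + 2)), Fin.last (p + 1) ∈ T → fmax T = Fin.last (p + 1) :=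
      fun T hT => le_antisymm (Fin.le_last _) (le_fmax hT)
    have hsub : ∀ A ∈ (Finset.univ.erase (Fin.last (p + 1))).powerset,
        Δ (W (K := K) x (Finset.univ \ A)) =
          ∑ B ∈ ((Finset.univ.erase (Fin.last (p + 1))) \ A).powerset,
            W (K := K) x B ⊗ₜ[K] W (K := K) x ((Finset.univ \ A) \ B) := by
      intro A hA
      have hAE := Finset.mem_powerset.mp hA
      have hlm : Fin.last (p + 1) ∈ Finset.univ \ A := Finset.mem_sdiff.mpr
        ⟨Finset.mem_univ _, fun hc => (Finset.mem_erase.mp (hAE hc)).1 rfl⟩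
      rw [DW Δ hΔ₀ hΔ x _, hfl _ hlm]
      have he : (Finset.univ \ A).erase (Fin.last (p + 1))
          = (Finset.univ.erase (Fin.last (p + 1))) \ A := by
        ext j
        simp only [Finset.mem_erase, Finset.mem_sdiff, Finset.mem_univ, true_and]
        tauto
      rw [he]
    have hDm := DW Δ hΔ₀ hΔ x (Finset.univ : Finset (Fin (p + 2)))
    rw [hfl _ (Finset.mem_univ _)] at hDm
    rw [hDm]
    simp only [map_sum, TensorProduct.map_tmul, LinearMap.id_coe, id_eq, LinearEquiv.coe_coe]
    rw [show (∑ A ∈ (Finset.univ.erase (Fin.last (p + 1))).powerset,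
        W (K := K) x A ⊗ₜ[K] Δ (W (K := K) x (Finset.univ \ A)))
        = ∑ A ∈ (Finset.univ.erase (Fin.last (p + 1))).powerset,
            ∑ B ∈ ((Finset.univ.erase (Fin.last (p + 1))) \ A).powerset,
              W (K := K) x A ⊗ₜ[K] (W (K := K) x B ⊗ₜ[K] W (K := K) x ((Finset.univ \ A) \ B))
      from Finset.sum_congr rfl fun A hA => by rw [hsub A hA, TensorProduct.tmul_sum]]
    rw [show (∑ A ∈ (Finset.univ.erase (Fin.last (p + 1))).powerset,
        (TensorProduct.assoc K (ReducedTensorModule K V) (ReducedTensorModule K V)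
          (ReducedTensorModule K V)) (Δ (W (K := K) x A) ⊗ₜ[K] W (K := K) x (Finset.univ \ A)))
        = ∑ A ∈ (Finset.univ.erase (Fin.last (p + 1))).powerset,
            ∑ C ∈ (A.erase (fmax A)).powerset,
              W (K := K) x C ⊗ₜ[K] (W (K := K) x (A \ C) ⊗ₜ[K] W (K := K) x (Finset.univ \ A))
      from Finset.sum_congr rfl fun A hA => by
        rw [DW Δ hΔ₀ hΔ x A, TensorProduct.sum_tmul, map_sum]
        exact Finset.sum_congr rfl fun C hC => TensorProduct.assoc_tmul _ _ _]
    rw [show (∑ A ∈ (Finset.univ.erase (Fin.last (p + 1))).powerset,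
        (TensorProduct.assoc K (ReducedTensorModule K V) (ReducedTensorModule K V)
          (ReducedTensorModule K V))
          ((TensorProduct.comm K (ReducedTensorModule K V) (ReducedTensorModule K V))
              (Δ (W (K := K) x A)) ⊗ₜ[K] W (K := K) x (Finset.univ \ A)))
        = ∑ A ∈ (Finset.univ.erase (Fin.last (p + 1))).powerset,
            ∑ C ∈ (A.erase (fmax A)).powerset,
              W (K := K) x (A \ C) ⊗ₜ[K] (W (K := K) x C ⊗ₜ[K] W (K := K) x (Finset.univ \ A))
      from Finset.sum_congr rfl fun A hA => by
        rw [DW Δ hΔ₀ hΔ x A, map_sum, TensorProduct.sum_tmul, map_sum]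
        exact Finset.sum_congr rfl fun C hC => by
          rw [TensorProduct.comm_tmul, TensorProduct.assoc_tmul]]
    exact final_combinatorial p x
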